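/- For all integers p ≥ 0 and a ≥ 1, one has (p+a)^a ≤ a^{a−1}·(p+1)·(p+2)·⋯·(p+a); equivalently, (p+a)^a · p! ≤ a^{a−1} · (p+a)!. -/

import Mathlib

lemma prod_icc_factorial (p : ℕ) : ∀ a : ℕ,
    (∏ i ∈ Finset.Icc 1 a, (p + i)) * p.factorial = (p + a).factorial := by
  intro a
  induction a with
  | zero => simp
  | succ n ih =>
      rw [Finset.prod_Icc_succ_top (Nat.succ_le_succ (Nat.zero_le n))]
      rw [mul_right_comm, ih]
      rw [← Nat.add_assoc, Nat.factorial_succ, Nat.mul_comm]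

theorem stmt16 (p a : ℕ) (ha : 1 ≤ a) :
    (p + a) ^ a ≤ a ^ (a - 1) * ∏ i ∈ Finset.Icc 1 a, (p + i) ∧
      (p + a) ^ a * p.factorial ≤ a ^ (a - 1) * (p + a).factorial := by
  have key : (p + a) ^ a ≤ a ^ (a - 1) * ∏ i ∈ Finset.Icc 1 a, (p + i) := by
    have hmem : a ∈ Finset.Icc 1 a := Finset.mem_Icc.mpr ⟨ha, le_refl a⟩
    have h1 : (p + a) ^ a = ∏ i ∈ Finset.Icc 1 a, (p + a) := by
      rw [Finset.prod_const, Nat.card_Icc]; simp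
    have h2 : ∀ i ∈ Finset.Icc 1 a,
        (p + a) ≤ (if i = a then 1 else a) * (p + i) := by
      intro i hi
      rcases Finset.mem_Icc.mp hi with ⟨h1i, h2i⟩
      by_cases h : i = a
      · simp [h]
      · simp only [h, if_neg, ite_false]
        calc p + a ≤ a * p + a := by nlinarith
          _ = a * (p + 1) := by ring
          _ ≤ a * (p + i) := Nat.mul_le_mul_left a (by omega)
    calc (p + a) ^ a = ∏ i ∈ Finset.Icc 1 a, (p + a) := h1
      _ ≤ ∏ i ∈ Finset.Icc 1 a, (if i = a then 1 else a) * (p + i) :=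
          Finset.prod_le_prod' h2
      _ = (∏ i ∈ Finset.Icc 1 a, (if i = a then 1 else a)) *
            ∏ i ∈ Finset.Icc 1 a, (p + i) := Finset.prod_mul_distrib
      _ = a ^ (a - 1) * ∏ i ∈ Finset.Icc 1 a, (p + i) := by
          congr 1
          rw [← Finset.mul_prod_erase _ _ hmem, if_pos rfl, one_mul]
          rw [Finset.prod_congr rfl (fun i hi => if_neg (Finset.ne_of_mem_erase hi))]
          rw [Finset.prod_const, Finset.card_erase_of_mem hmem, Nat.card_Icc]
          simp
  refine ⟨key, ?_⟩
  calc (p + a) ^ a * p.factorial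
      ≤ (a ^ (a - 1) * ∏ i ∈ Finset.Icc 1 a, (p + i)) * p.factorial :=
        Nat.mul_le_mul_right _ key
    _ = a ^ (a - 1) * (p + a).factorial := by
        rw [mul_assoc, prod_icc_factorial]
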